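/- Let M₊² = u₊²/(Rγθ₊) with u₊, θ₊ > 0 and R, μ, κ > 0, γ > 1, and let J be the matrix with entries J₁₁ = (u₊² - Rθ₊)/(μ u₊), J₁₂ = R/μ, J₂₁ = Rθ₊/κ, J₂₂ = R u₊/(κ(γ-1)). If M₊ > 1, then both eigenvalues of J are real and positive. -/
import Mathlib

lemma charpoly_fin_two' (a b c d : ℝ) :
    Matrix.charpoly !![a, b; c, d]
      = Polynomial.X ^ 2 - Polynomial.C (a + d) * Polynomial.X
        + Polynomial.C (a * d - b * c) := by
  rw [Matrix.charpoly, Matrix.det_fin_two]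
  simp [Matrix.charmatrix_apply_eq, Matrix.charmatrix_apply_ne]
  ring

theorem stmt_3 (R γ μ κ θp up Mp : ℝ)
    (hR : 0 < R) (hγ : 1 < γ) (hμ : 0 < μ) (hκ : 0 < κ) (hθ : 0 < θp) (hu : 0 < up)
    (hM : Mp ^ 2 = up ^ 2 / (R * γ * θp)) (hM1 : 1 < Mp) :
    ∃ l₁ l₂ : ℝ, 0 < l₁ ∧ 0 < l₂ ∧
      Matrix.charpoly !![(up ^ 2 - R * θp) / (μ * up), R / μ;
                         R * θp / κ, R * up / (κ * (γ - 1))]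
        = (Polynomial.X - Polynomial.C l₁) * (Polynomial.X - Polynomial.C l₂) := by
  have hγ' : 0 < γ - 1 := by linarith
  set a := (up ^ 2 - R * θp) / (μ * up) with ha_def
  set b := R / μ with hb_def
  set c := R * θp / κ with hc_def
  set d := R * up / (κ * (γ - 1)) with hd_def
  -- supersonic: up^2 > R γ θp
  have hRγθ : 0 < R * γ * θp := by positivity
  have hu2 : R * γ * θp < up ^ 2 := by
    have h2 : up ^ 2 = Mp ^ 2 * (R * γ * θp) := by
      field_simp at hM; linarith [hM]
    have h3 : 1 < Mp ^ 2 := by nlinarith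
    nlinarith
  have hnum : 0 < up ^ 2 - R * θp := by nlinarith
  have ha : 0 < a := div_pos hnum (by positivity)
  have hd : 0 < d := div_pos (by positivity) (by positivity)
  have hbc : 0 < b * c := by
    rw [hb_def, hc_def]; positivity
  have hD : 0 < a * d - b * c := by
    have key : a * d - b * c = R * (up ^ 2 - R * γ * θp) / (μ * κ * (γ - 1)) := by
      rw [ha_def, hb_def, hc_def, hd_def]
      field_simp
      ring
    rw [key]
    apply div_pos
    · nlinarith
    · positivity
  set Δ := (a - d) ^ 2 + 4 * (b * c) with hΔ_def
  have hΔ : 0 ≤ Δ := by positivity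
  set s := Real.sqrt Δ with hs_def
  have hs0 : 0 ≤ s := Real.sqrt_nonneg _
  have hs2 : s ^ 2 = Δ := Real.sq_sqrt hΔ
  have hsT : s < a + d := by
    nlinarith [hs2, hD, ha, hd, hs0]
  refine ⟨(a + d + s) / 2, (a + d - s) / 2, by linarith, by linarith, ?_⟩
  rw [charpoly_fin_two']
  have h1 : a + d = (a + d + s) / 2 + (a + d - s) / 2 := by ring
  have h2 : a * d - b * c = (a + d + s) / 2 * ((a + d - s) / 2) := by
    linear_combination hs2 / 4
  have h3 : a * d - b * c = a * d - b * c := rfl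
  rw [show a * d - b * c = (a + d + s) / 2 * ((a + d - s) / 2) from h2] at h3
  calc Polynomial.X ^ 2 - Polynomial.C (a + d) * Polynomial.X +
        Polynomial.C (a * d - b * c)
      = Polynomial.X ^ 2 -
          Polynomial.C ((a + d + s) / 2 + (a + d - s) / 2) * Polynomial.X +
          Polynomial.C ((a + d + s) / 2 * ((a + d - s) / 2)) := by rw [← h1, ← h2]
    _ = (Polynomial.X - Polynomial.C ((a + d + s) / 2)) *
          (Polynomial.X - Polynomial.C ((a + d - s) / 2)) := by
        rw [Polynomial.C_add, Polynomial.C_mul]; ring
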